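/- For n = 2: the number of conjugation orbits of the group U₂(q) of upper unitriangular 2×2 matrices on PGL₂(q) equals q² + q − 2, for every prime power q. -/

import Mathlib

open Matrix MulAction

set_option linter.unusedSectionVars false
set_option maxHeartbeats 1000000

namespace Stmt16Aux

variable {F : Type*} [Field F]

/-- the unipotent matrix `!![1,t;0,1]` as an element of `GL (Fin 2) F`. -/
def w (t : F) : GL (Fin 2) F :=
  ⟨!![1, t; 0, 1], !![1, -t; 0, 1],
    by ext i j; fin_cases i <;> fin_cases j <;>
      simp [Matrix.mul_apply, Fin.sum_univ_two],
    by ext i j; fin_cases i <;> fin_cases j <;>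
      simp [Matrix.mul_apply, Fin.sum_univ_two]⟩

@[simp] lemma w_val (t : F) : (w t).val = !![1, t; 0, 1] := rfl

lemma w_add (s t : F) : w (s + t) = w s * w t := by
  apply Units.ext
  ext i j
  fin_cases i <;> fin_cases j <;>
    simp [w, Matrix.mul_apply, Fin.sum_univ_two, add_comm]

@[simp] lemma w_zero : (w 0 : GL (Fin 2) F) = 1 := by
  apply Units.ext; ext i j; fin_cases i <;> fin_cases j <;> simp [w]

def v : GL (Fin 2) F :=
  ⟨!![1, 0; 1, 1], !![1, 0; -1, 1],
    by ext i j; fin_cases i <;> fin_cases j <;>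
      simp [Matrix.mul_apply, Fin.sum_univ_two],
    by ext i j; fin_cases i <;> fin_cases j <;>
      simp [Matrix.mul_apply, Fin.sum_univ_two]⟩

/-- the scalar matrix as an element of `GL (Fin 2) F`. -/
def sc (c : Fˣ) : GL (Fin 2) F :=
  ⟨(c : F) • 1, ((c⁻¹ : Fˣ) : F) • 1,
    by simp [smul_smul], by simp [smul_smul]⟩

@[simp] lemma sc_val (c : Fˣ) : (sc c).val = (c : F) • 1 := rfl

lemma sc_mem_center (c : Fˣ) : sc c ∈ Subgroup.center (GL (Fin 2) F) := by
  rw [Subgroup.mem_center_iff]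
  intro g
  apply Units.ext
  show g.val * ((c : F) • 1) = ((c : F) • 1) * g.val
  simp [mul_smul_comm, smul_mul_assoc]

lemma mem_center_iff {A : GL (Fin 2) F} :
    A ∈ Subgroup.center (GL (Fin 2) F) ↔ ∃ c : Fˣ, A = sc c := by
  constructor
  · intro h
    rw [Subgroup.mem_center_iff] at h
    have h1 := congrArg Units.val (h (w 1))
    have h2 := congrArg Units.val (h v)
    have e10 : A.val 1 0 = 0 := by
      have := congrFun (congrFun h1 0) 0
      simpa [w, Matrix.mul_apply, Fin.sum_univ_two] using this
    have e01 : A.val 0 1 = 0 := by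
      have := congrFun (congrFun h2 1) 1
      simpa [v, Matrix.mul_apply, Fin.sum_univ_two] using this
    have ediag : A.val 1 1 = A.val 0 0 := by
      have h' := congrFun (congrFun h1 0) 1
      simp [w, Matrix.mul_apply, Fin.sum_univ_two, e10] at h'
      linear_combination h'
    have hv1 : A.val 0 0 * A.inv 0 0 = 1 := by
      have := congrFun (congrFun A.val_inv 0) 0
      simpa [Matrix.mul_apply, Fin.sum_univ_two, e01] using this
    have hv2 : A.inv 0 0 * A.val 0 0 = 1 := by
      have := congrFun (congrFun A.inv_val 0) 0
      simpa [Matrix.mul_apply, Fin.sum_univ_two, e10] using this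
    refine ⟨⟨A.val 0 0, A.inv 0 0, hv1, hv2⟩, ?_⟩
    apply Units.ext
    ext i j
    fin_cases i <;> fin_cases j <;>
      simp [e10, e01, ediag, Matrix.one_apply]
  · rintro ⟨c, rfl⟩; exact sc_mem_center c

/-- the center of `GL (Fin 2) F` is in bijection with `Fˣ`. -/
noncomputable def centerEquiv : Fˣ ≃ Subgroup.center (GL (Fin 2) F) := by
  apply Equiv.ofBijective (f := fun c => (⟨sc c, sc_mem_center c⟩ :
    Subgroup.center (GL (Fin 2) F)))
  constructor
  · intro c c' h
    have h' := congrFun (congrFun (congrArg (fun A : Subgroup.center (GL (Fin 2) F) =>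
      (A.1.val : Matrix (Fin 2) (Fin 2) F)) h) 0) 0
    simp at h'
    exact Units.ext h'
  · rintro ⟨A, hA⟩
    obtain ⟨c, rfl⟩ := mem_center_iff.mp hA
    exact ⟨c, rfl⟩

/-- general: preimage of a set under quotient map is equivalent to the product with the
subgroup. -/
noncomputable def preimageEquiv {G : Type*} [Group G] (N : Subgroup G) [N.Normal]
    (S : Set (G ⧸ N)) :
    (QuotientGroup.mk ⁻¹' S : Set G) ≃ S × N := by
  apply Equiv.symm
  apply Equiv.ofBijective (f := fun p : S × N =>
    (⟨Quotient.out p.1.1 * p.2.1, by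
      have h2 : (QuotientGroup.mk p.2.1 : G ⧸ N) = 1 := by
        rw [QuotientGroup.eq_one_iff]; exact p.2.2
      have : (QuotientGroup.mk (Quotient.out p.1.1 * p.2.1) : G ⧸ N) = p.1.1 := by
        rw [QuotientGroup.mk_mul]
        simp [h2]
      simpa [Set.mem_preimage, this] using p.1.2⟩ :
      (QuotientGroup.mk ⁻¹' S : Set G)))
  constructor
  · rintro ⟨⟨x, hx⟩, ⟨z, hz⟩⟩ ⟨⟨x', hx'⟩, ⟨z', hz'⟩⟩ h
    have h' : Quotient.out x * z = Quotient.out x' * z' := congrArg Subtype.val h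
    have hxx : x = x' := by
      have := congrArg (QuotientGroup.mk (s := N)) h'
      have e1 : (QuotientGroup.mk z : G ⧸ N) = 1 := (QuotientGroup.eq_one_iff z).mpr hz
      have e2 : (QuotientGroup.mk z' : G ⧸ N) = 1 := (QuotientGroup.eq_one_iff z').mpr hz'
      simpa [QuotientGroup.mk_mul, e1, e2] using this
    subst hxx
    have : z = z' := mul_left_cancel h'
    simp_all
  · rintro ⟨g, hg⟩
    refine ⟨⟨⟨QuotientGroup.mk g, hg⟩, ⟨(Quotient.out (QuotientGroup.mk g : G ⧸ N))⁻¹ * g, ?_⟩⟩, ?_⟩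
    · rw [← QuotientGroup.eq_one_iff, QuotientGroup.mk_mul, QuotientGroup.mk_inv]
      simp
    · apply Subtype.ext
      simp

/-- the "Borel with equal diagonal" set -/
def P : Set (GL (Fin 2) F) := {g | g.val 1 0 = 0 ∧ g.val 0 0 = g.val 1 1}

lemma preimage_fixed_eq {t : F} (ht : t ≠ 0) :
    (QuotientGroup.mk ⁻¹'
      {x : GL (Fin 2) F ⧸ Subgroup.center (GL (Fin 2) F) |
        (QuotientGroup.mk (w t)) * x * (QuotientGroup.mk (w t))⁻¹ = x})
      = (P : Set (GL (Fin 2) F)) := by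
  ext g
  simp only [Set.mem_preimage, Set.mem_setOf_eq, P]
  constructor
  · intro h
    have h' : (QuotientGroup.mk (w t * g * (w t)⁻¹) :
        GL (Fin 2) F ⧸ Subgroup.center (GL (Fin 2) F)) = QuotientGroup.mk g := by
      simpa [QuotientGroup.mk_mul, QuotientGroup.mk_inv] using h
    rw [QuotientGroup.eq] at h'
    obtain ⟨c, hc⟩ := mem_center_iff.mp h'
    have key : g * w t = w t * g * sc c := by
      have hg : g = w t * g * (w t)⁻¹ * sc c := by
        rw [← hc]; group
      have comm : sc c * w t = w t * sc c :=
        (Subgroup.mem_center_iff.mp (sc_mem_center c) (w t)).symm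
      calc g * w t = w t * g * (w t)⁻¹ * sc c * w t := by rw [← hg]
        _ = w t * g * (w t)⁻¹ * w t * sc c := by rw [mul_assoc _ (sc c), comm, ← mul_assoc]
        _ = w t * g * sc c := by group
    have mval : g.val * (w t).val = (c : F) • ((w t).val * g.val) := by
      have := congrArg Units.val key
      simpa [mul_smul_comm, mul_assoc] using this
    have e10 := congrFun (congrFun mval 1) 0
    have e00 := congrFun (congrFun mval 0) 0
    have e11 := congrFun (congrFun mval 1) 1
    have e01 := congrFun (congrFun mval 0) 1
    simp [Matrix.mul_apply, Fin.sum_univ_two, Matrix.vecMul, dotProduct,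
      Matrix.vecHead, Matrix.vecTail] at e10 e00 e11 e01
    have hA10 : g.val 1 0 = 0 := by
      by_contra hne
      have hc1 : (c : F) = 1 := by
        have := mul_right_cancel₀ hne (show (c : F) * g.val 1 0 = 1 * g.val 1 0 by
          rw [one_mul]; linear_combination -e10)
        exact this
      rw [hc1] at e00
      have h0 : t * g.val 1 0 = 0 := by linear_combination -e00
      rcases mul_eq_zero.mp h0 with h1 | h2
      · exact ht h1
      · exact hne h2
    have hdet : IsUnit (g.val.det) := (Matrix.isUnit_iff_isUnit_det _).mp g.isUnit
    have hdet2 : g.val 0 0 * g.val 1 1 ≠ 0 := by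
      rw [Matrix.det_fin_two, hA10] at hdet
      simpa using hdet.ne_zero
    have hA11 : g.val 1 1 ≠ 0 := fun h => hdet2 (by rw [h, mul_zero])
    have hc1 : (c : F) = 1 := by
      have := mul_right_cancel₀ hA11 (show (c : F) * g.val 1 1 = 1 * g.val 1 1 by
        rw [one_mul]; linear_combination -e11 + t * hA10)
      exact this
    rw [hc1] at e01
    have : g.val 0 0 = g.val 1 1 := by
      have h2 : t * g.val 0 0 = t * g.val 1 1 := by linear_combination e01
      exact mul_left_cancel₀ ht h2
    exact ⟨hA10, this⟩
  · rintro ⟨h10, hdiag⟩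
    have comm : w t * g = g * w t := by
      apply Units.ext
      ext i j
      fin_cases i <;> fin_cases j <;>
        simp [Matrix.mul_apply, Fin.sum_univ_two, h10, hdiag] <;> ring
    have hfix : w t * g * (w t)⁻¹ = g := by rw [comm]; group
    calc QuotientGroup.mk (w t) * QuotientGroup.mk g * (QuotientGroup.mk (w t))⁻¹
        = (QuotientGroup.mk (w t * g * (w t)⁻¹) :
            GL (Fin 2) F ⧸ Subgroup.center (GL (Fin 2) F)) := by
          simp [QuotientGroup.mk_mul, QuotientGroup.mk_inv]
      _ = QuotientGroup.mk g := by rw [hfix]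

noncomputable def PEquiv : (P : Set (GL (Fin 2) F)) ≃ Fˣ × F := by
  apply Equiv.symm
  apply Equiv.ofBijective (f := fun p : Fˣ × F =>
    (⟨⟨!![(p.1 : F), p.2; 0, (p.1 : F)],
        !![((p.1⁻¹ : Fˣ) : F), -(((p.1⁻¹ : Fˣ) : F)) * p.2 * ((p.1⁻¹ : Fˣ) : F); 0,
          ((p.1⁻¹ : Fˣ) : F)],
        by
          have hne : (p.1 : F) ≠ 0 := Units.ne_zero p.1
          ext i j; fin_cases i <;> fin_cases j <;>
            simp [Matrix.mul_apply, Fin.sum_univ_two] <;> field_simp <;> ring,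
        by
          have hne : (p.1 : F) ≠ 0 := Units.ne_zero p.1
          ext i j; fin_cases i <;> fin_cases j <;>
            simp [Matrix.mul_apply, Fin.sum_univ_two] <;> field_simp <;> ring⟩,
      by constructor <;> simp⟩ : (P : Set (GL (Fin 2) F))))
  constructor
  · rintro ⟨c, b⟩ ⟨c', b'⟩ h
    have h' := congrArg (fun x => (x : GL (Fin 2) F).val) (congrArg Subtype.val h)
    have h00 := congrFun (congrFun h' 0) 0
    have h01 := congrFun (congrFun h' 0) 1
    simp at h00 h01
    ext
    · exact h00
    · exact h01
  · rintro ⟨g, hg10, hgd⟩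
    have hdet : IsUnit (g.val.det) := (Matrix.isUnit_iff_isUnit_det _).mp g.isUnit
    have hdet2 : IsUnit (g.val 0 0 * g.val 1 1) := by
      rwa [Matrix.det_fin_two, hg10, mul_zero, sub_zero] at hdet
    have h00 : IsUnit (g.val 0 0) := isUnit_of_mul_isUnit_left hdet2
    refine ⟨⟨h00.unit, g.val 0 1⟩, ?_⟩
    apply Subtype.ext
    apply Units.ext
    ext i j
    fin_cases i <;> fin_cases j <;> simp [hg10, ← hgd]

/-- generic orbit-count bijection. -/
lemma orbitCount (Γ : Type*) [Group Γ] (K : Subgroup (ConjAct Γ)) :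
    Nat.card {C : Set Γ // ∃ g : Γ,
        C = {h | ∃ x ∈ ConjAct.ofConjAct '' (K : Set (ConjAct Γ)), x * g * x⁻¹ = h}}
      = Nat.card (orbitRel.Quotient K Γ) := by
  apply Nat.card_congr
  apply Equiv.symm
  apply Equiv.ofBijective (f := fun ω : orbitRel.Quotient K Γ =>
    (⟨ω.orbit, Quotient.out ω, by
      rw [orbitRel.Quotient.orbit_eq_orbit_out ω Quotient.out_eq']
      ext h
      simp only [Set.mem_setOf_eq, MulAction.mem_orbit_iff]
      constructor
      · rintro ⟨u, rfl⟩
        exact ⟨ConjAct.ofConjAct u.1, ⟨u.1, u.2, rfl⟩, by rw [Subgroup.smul_def, ConjAct.smul_def]⟩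
      · rintro ⟨x, ⟨y, hy, rfl⟩, rfl⟩
        exact ⟨⟨y, hy⟩, by rw [Subgroup.smul_def, ConjAct.smul_def]⟩⟩ :
      {C : Set Γ // ∃ g : Γ,
        C = {h | ∃ x ∈ ConjAct.ofConjAct '' (K : Set (ConjAct Γ)), x * g * x⁻¹ = h}}))
  constructor
  · intro ω ω' h
    exact orbitRel.Quotient.orbit_injective (congrArg Subtype.val h)
  · rintro ⟨C, g, rfl⟩
    refine ⟨Quotient.mk'' g, ?_⟩
    apply Subtype.ext
    show orbitRel.Quotient.orbit (Quotient.mk'' g : orbitRel.Quotient K Γ) = _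
    rw [orbitRel.Quotient.orbit_mk]
    ext h
    simp only [Set.mem_setOf_eq, MulAction.mem_orbit_iff]
    constructor
    · rintro ⟨u, rfl⟩
      exact ⟨ConjAct.ofConjAct u.1, ⟨u.1, u.2, rfl⟩, by rw [Subgroup.smul_def, ConjAct.smul_def]⟩
    · rintro ⟨x, ⟨y, hy, rfl⟩, rfl⟩
      exact ⟨⟨y, hy⟩, by rw [Subgroup.smul_def, ConjAct.smul_def]⟩

/-- the group homomorphism `F → GL₂` (additive to multiplicative). -/
def wHom : Multiplicative F →* GL (Fin 2) F :=
  MonoidHom.mk' (fun t => w t.toAdd) (fun a b => by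
    show w (a * b).toAdd = w a.toAdd * w b.toAdd
    rw [toAdd_mul, w_add])

/-- the homomorphism into `ConjAct` of `PGL₂`. -/
def φ : Multiplicative F →*
    ConjAct (GL (Fin 2) F ⧸ Subgroup.center (GL (Fin 2) F)) :=
  (ConjAct.toConjAct (G := GL (Fin 2) F ⧸ Subgroup.center (GL (Fin 2) F))).toMonoidHom.comp
    ((QuotientGroup.mk' (Subgroup.center (GL (Fin 2) F))).comp wHom)

lemma φ_apply (t : F) : φ (Multiplicative.ofAdd t) =
    ConjAct.toConjAct (QuotientGroup.mk (w t) :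
      GL (Fin 2) F ⧸ Subgroup.center (GL (Fin 2) F)) := rfl

lemma φ_injective : Function.Injective (φ (F := F)) := by
  intro a b h
  have h' : (QuotientGroup.mk (w a.toAdd) :
      GL (Fin 2) F ⧸ Subgroup.center (GL (Fin 2) F)) = QuotientGroup.mk (w b.toAdd) :=
    ConjAct.toConjAct.injective h
  rw [QuotientGroup.eq] at h'
  obtain ⟨c, hc⟩ := mem_center_iff.mp h'
  have hinv : (w a.toAdd)⁻¹ = w (-a.toAdd) := by
    apply Units.ext
    rfl
  rw [hinv, ← w_add] at hc
  have h01 := (Matrix.GeneralLinearGroup.ext_iff _ _).mp hc 0 1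
  simp [w, Matrix.one_apply] at h01
  have hab : Multiplicative.toAdd b = Multiplicative.toAdd a := by linear_combination h01
  exact Multiplicative.toAdd.injective hab.symm

end Stmt16Aux

/-- The number of conjugation orbits of the image of the group `U₂(q)` of upper
unitriangular `2×2` matrices on `PGL₂(q) = GL₂(q)/{scalars}` equals `q² + q − 2`
for every prime power `q`. -/
theorem stmt_16 (F : Type*) [Field F] [Fintype F] (q : ℕ) (hq : q = Fintype.card F)
    (U : Set (Matrix.GeneralLinearGroup (Fin 2) F))
    (hU : U = {g : Matrix.GeneralLinearGroup (Fin 2) F |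
      (∀ i j : Fin 2, j < i → g.val i j = 0) ∧ ∀ i : Fin 2, g.val i i = 1}) :
    (Nat.card {C : Set (Matrix.GeneralLinearGroup (Fin 2) F ⧸
        Subgroup.center (Matrix.GeneralLinearGroup (Fin 2) F)) //
      ∃ g : Matrix.GeneralLinearGroup (Fin 2) F ⧸
          Subgroup.center (Matrix.GeneralLinearGroup (Fin 2) F),
        C = {h | ∃ x ∈ (QuotientGroup.mk '' U :
            Set (Matrix.GeneralLinearGroup (Fin 2) F ⧸
              Subgroup.center (Matrix.GeneralLinearGroup (Fin 2) F))),
          x * g * x⁻¹ = h}} : ℤ) = q ^ 2 + q - 2 := by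
  classical
  open Stmt16Aux in
  have hq2 : 2 ≤ q := by rw [hq]; exact Fintype.one_lt_card
  -- U is the range of w
  have hUw : U = Set.range (w (F := F)) := by
    rw [hU]
    ext g
    constructor
    · rintro ⟨hlow, hdiag⟩
      refine ⟨g.val 0 1, ?_⟩
      apply Units.ext
      ext i j
      fin_cases i <;> fin_cases j
      · simpa [w] using (hdiag 0).symm
      · simp [w]
      · simpa [w] using (hlow 1 0 (by norm_num)).symm
      · simpa [w] using (hdiag 1).symm
    · rintro ⟨t, rfl⟩
      constructor
      · intro i j hij
        fin_cases i <;> fin_cases j <;> simp_all [w]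
      · intro i; fin_cases i <;> simp [w]
  set K : Subgroup (ConjAct (Matrix.GeneralLinearGroup (Fin 2) F ⧸
      Subgroup.center (Matrix.GeneralLinearGroup (Fin 2) F))) := (φ (F := F)).range with hK
  -- the image of U equals the (ofConjAct image of) K
  have hset : (QuotientGroup.mk '' U : Set (Matrix.GeneralLinearGroup (Fin 2) F ⧸
        Subgroup.center (Matrix.GeneralLinearGroup (Fin 2) F)))
      = ConjAct.ofConjAct '' (K : Set _) := by
    rw [hUw]
    ext x
    constructor
    · rintro ⟨g, ⟨t, rfl⟩, rfl⟩
      exact ⟨ConjAct.toConjAct (QuotientGroup.mk (w t)),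
        ⟨Multiplicative.ofAdd t, rfl⟩, ConjAct.ofConjAct_toConjAct _⟩
    · rintro ⟨y, ⟨t, rfl⟩, rfl⟩
      exact ⟨w (Multiplicative.toAdd t), ⟨Multiplicative.toAdd t, rfl⟩,
        (ConjAct.ofConjAct_toConjAct _).symm⟩
  rw [hset, orbitCount _ K]
  -- finiteness instances
  haveI : Finite (Matrix.GeneralLinearGroup (Fin 2) F ⧸
      Subgroup.center (Matrix.GeneralLinearGroup (Fin 2) F)) := Quotient.finite _
  haveI instQ : Fintype (Matrix.GeneralLinearGroup (Fin 2) F ⧸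
      Subgroup.center (Matrix.GeneralLinearGroup (Fin 2) F)) := Fintype.ofFinite _
  haveI : Fintype K := Fintype.ofFinite _
  haveI instFix : ∀ a : K, Fintype (MulAction.fixedBy (Matrix.GeneralLinearGroup (Fin 2) F ⧸
      Subgroup.center (Matrix.GeneralLinearGroup (Fin 2) F)) a) := fun a => Fintype.ofFinite _
  haveI instOrb : Fintype (Quotient (orbitRel K (Matrix.GeneralLinearGroup (Fin 2) F ⧸
      Subgroup.center (Matrix.GeneralLinearGroup (Fin 2) F)))) := Fintype.ofFinite _
  -- Burnside
  have burnside := MulAction.sum_card_fixedBy_eq_card_orbits_mul_card_group (G := K)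
    (X := Matrix.GeneralLinearGroup (Fin 2) F ⧸
      Subgroup.center (Matrix.GeneralLinearGroup (Fin 2) F))
  -- the equivalence F ≃ K
  have hKinj : Function.Injective (φ (F := F)) := φ_injective
  let eK : F ≃ K :=
    (Multiplicative.ofAdd (α := F)).trans (MulEquiv.toEquiv (MonoidHom.ofInjective hKinj))
  have heKval : ∀ t : F, ((eK t).1 : ConjAct (Matrix.GeneralLinearGroup (Fin 2) F ⧸
        Subgroup.center (Matrix.GeneralLinearGroup (Fin 2) F))) =
      ConjAct.toConjAct (QuotientGroup.mk (w t) : Matrix.GeneralLinearGroup (Fin 2) F ⧸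
        Subgroup.center (Matrix.GeneralLinearGroup (Fin 2) F)) := fun t => rfl
  -- cardinality of the center
  have hcardZ : Nat.card (Subgroup.center (Matrix.GeneralLinearGroup (Fin 2) F)) = q - 1 := by
    rw [← Nat.card_congr (centerEquiv (F := F)), Nat.card_eq_fintype_card,
      Fintype.card_units, hq]
  -- cardinality of K
  have hcardK : Fintype.card K = q := by
    rw [← Nat.card_eq_fintype_card, Nat.card_congr eK.symm, Nat.card_eq_fintype_card, hq]
  -- cardinality of the big group
  have hcardG : Nat.card (Matrix.GeneralLinearGroup (Fin 2) F) = (q ^ 2 - 1) * (q ^ 2 - q) := by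
    rw [Matrix.card_GL_field, Fin.prod_univ_two]
    rw [hq]
    norm_num
  have hcardQmul : Nat.card (Matrix.GeneralLinearGroup (Fin 2) F ⧸
        Subgroup.center (Matrix.GeneralLinearGroup (Fin 2) F)) * (q - 1)
      = (q ^ 2 - 1) * (q ^ 2 - q) := by
    rw [← hcardZ, ← hcardG]
    exact (Subgroup.card_eq_card_quotient_mul_card_subgroup _).symm
  -- fixed point counts
  have hfix_zero : Fintype.card (MulAction.fixedBy (Matrix.GeneralLinearGroup (Fin 2) F ⧸
        Subgroup.center (Matrix.GeneralLinearGroup (Fin 2) F)) (eK 0))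
      = Nat.card (Matrix.GeneralLinearGroup (Fin 2) F ⧸
        Subgroup.center (Matrix.GeneralLinearGroup (Fin 2) F)) := by
    have h1 : eK 0 = (1 : K) := by
      apply Subtype.ext
      rw [heKval 0]
      simp [w_zero]
    rw [h1]
    have h2 : MulAction.fixedBy (Matrix.GeneralLinearGroup (Fin 2) F ⧸
        Subgroup.center (Matrix.GeneralLinearGroup (Fin 2) F)) (1 : K) = Set.univ :=
      Set.eq_univ_of_forall fun x => one_smul K x
    rw [← Nat.card_eq_fintype_card, h2, Nat.card_congr (Equiv.Set.univ _)]
  have hfix_ne : ∀ t : F, t ≠ 0 →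
      Fintype.card (MulAction.fixedBy (Matrix.GeneralLinearGroup (Fin 2) F ⧸
        Subgroup.center (Matrix.GeneralLinearGroup (Fin 2) F)) (eK t)) = q := by
    intro t ht
    have hfixt : MulAction.fixedBy (Matrix.GeneralLinearGroup (Fin 2) F ⧸
        Subgroup.center (Matrix.GeneralLinearGroup (Fin 2) F)) (eK t)
        = {x | (QuotientGroup.mk (w t)) * x * (QuotientGroup.mk (w t))⁻¹ = x} := by
      ext x
      rw [MulAction.mem_fixedBy, Subgroup.smul_def, ConjAct.smul_def, heKval t]
      simp [Set.mem_setOf_eq]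
    have key := Nat.card_congr (preimageEquiv (Subgroup.center (Matrix.GeneralLinearGroup (Fin 2) F))
      {x : Matrix.GeneralLinearGroup (Fin 2) F ⧸
          Subgroup.center (Matrix.GeneralLinearGroup (Fin 2) F) |
        (QuotientGroup.mk (w t)) * x * (QuotientGroup.mk (w t))⁻¹ = x})
    rw [preimage_fixed_eq ht] at key
    rw [Nat.card_congr (PEquiv (F := F)), Nat.card_prod, Nat.card_prod, hcardZ] at key
    rw [Nat.card_eq_fintype_card (α := Fˣ), Fintype.card_units, ← hq] at key
    rw [Nat.card_eq_fintype_card (α := F), ← hq] at key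
    -- key : (q-1) * q = Nat.card S * (q-1)
    have hq1 : 0 < q - 1 := by omega
    have : Nat.card {x : Matrix.GeneralLinearGroup (Fin 2) F ⧸
          Subgroup.center (Matrix.GeneralLinearGroup (Fin 2) F) |
        (QuotientGroup.mk (w t)) * x * (QuotientGroup.mk (w t))⁻¹ = x} = q := by
      have h2 : Nat.card {x : Matrix.GeneralLinearGroup (Fin 2) F ⧸
          Subgroup.center (Matrix.GeneralLinearGroup (Fin 2) F) |
        (QuotientGroup.mk (w t)) * x * (QuotientGroup.mk (w t))⁻¹ = x} * (q - 1)
          = q * (q - 1) := by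
        rw [← key]; ring
      exact Nat.eq_of_mul_eq_mul_right hq1 h2
    rw [← Nat.card_eq_fintype_card, hfixt]
    exact this
  -- assemble the sum
  have hsum : (∑ t : F, Fintype.card (MulAction.fixedBy
      (Matrix.GeneralLinearGroup (Fin 2) F ⧸
        Subgroup.center (Matrix.GeneralLinearGroup (Fin 2) F)) (eK t)))
      = Nat.card (Matrix.GeneralLinearGroup (Fin 2) F ⧸
        Subgroup.center (Matrix.GeneralLinearGroup (Fin 2) F)) + (q - 1) * q := by
    rw [← Finset.add_sum_erase Finset.univ _ (Finset.mem_univ (0 : F)), hfix_zero]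
    congr 1
    rw [Finset.sum_congr rfl (fun t ht => hfix_ne t (Finset.ne_of_mem_erase ht)),
      Finset.sum_const, smul_eq_mul, Finset.card_erase_of_mem (Finset.mem_univ _),
      Finset.card_univ, ← hq]
  have hsum2 : (∑ a : K, Fintype.card (MulAction.fixedBy
      (Matrix.GeneralLinearGroup (Fin 2) F ⧸
        Subgroup.center (Matrix.GeneralLinearGroup (Fin 2) F)) a))
      = Nat.card (Matrix.GeneralLinearGroup (Fin 2) F ⧸
        Subgroup.center (Matrix.GeneralLinearGroup (Fin 2) F)) + (q - 1) * q := by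
    rw [← Equiv.sum_comp eK (fun a : K => Fintype.card (MulAction.fixedBy
      (Matrix.GeneralLinearGroup (Fin 2) F ⧸
        Subgroup.center (Matrix.GeneralLinearGroup (Fin 2) F)) a))]
    exact hsum
  rw [hsum2, hcardK] at burnside
  -- final arithmetic over ℤ
  have h1q : 1 ≤ q := by omega
  have h1q2 : 1 ≤ q ^ 2 := Nat.one_le_pow _ _ (by omega)
  have hqq2 : q ≤ q ^ 2 := by nlinarith
  have hcardQ : (Nat.card (Matrix.GeneralLinearGroup (Fin 2) F ⧸
        Subgroup.center (Matrix.GeneralLinearGroup (Fin 2) F)) : ℤ) = q ^ 3 - q := by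
    have := congrArg (fun n : ℕ => (n : ℤ)) hcardQmul
    push_cast [Nat.cast_sub h1q, Nat.cast_sub h1q2, Nat.cast_sub hqq2] at this
    have hne : ((q : ℤ) - 1) ≠ 0 := by
      have : (2 : ℤ) ≤ q := by exact_mod_cast hq2
      omega
    apply mul_right_cancel₀ hne
    rw [this]; ring
  have hburn := congrArg (fun n : ℕ => (n : ℤ)) burnside
  push_cast [Nat.cast_sub h1q] at hburn
  rw [hcardQ] at hburn
  -- hburn : q^3 - q + (q-1)*q = card * q
  have hqne : ((q : ℤ)) ≠ 0 := by positivity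
  have hfinal : (Fintype.card (Quotient (orbitRel K (Matrix.GeneralLinearGroup (Fin 2) F ⧸
      Subgroup.center (Matrix.GeneralLinearGroup (Fin 2) F)))) : ℤ) = q ^ 2 + q - 2 := by
    apply mul_right_cancel₀ hqne
    rw [← hburn]; ring
  rw [Nat.card_eq_fintype_card]
  exact hfinal
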